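/- Let k ≥ 0 be an integer, let r > 0 and δ > 0 with δ ≤ 0.1·r and 60·(k+1)²·δ ≤ r, and let x₀, x₁, …, x_k, w ∈ ℝ^N satisfy: |‖x_α − x₀‖ − r| ≤ δ for every α ∈ {1,…,k}; |‖x_α − x_β‖ − √2·r| ≤ δ for all distinct α, β ∈ {1,…,k}; |‖w − x₀‖ − r| ≤ δ; and |‖w − x_α‖ − √2·r| ≤ δ for every α ∈ {1,…,k}. Then for every v = (v₀, v₁, …, v_k) ∈ ℝ^{k+1} one has ‖Σ_{α=0}^{k} v_α·(w − x_α)‖ ≥ (r/(2·√(k+1)))·‖v‖. -/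

import Mathlib

open scoped BigOperators

open Finset

private lemma aux_sq_close {t s d r : ℝ} (hr : 0 < r) (hd : 0 < d) (hdr : d ≤ 0.1 * r)
    (hs0 : 0 ≤ s) (hs : s ≤ Real.sqrt 2 * r) (h : |t - s| ≤ d) :
    |t ^ 2 - s ^ 2| ≤ 3 * r * d := by
  have h2 : Real.sqrt 2 ≤ 1.45 := by
    nlinarith [Real.sq_sqrt (by norm_num : (0:ℝ) ≤ 2), Real.sqrt_nonneg 2]
  have hs' : s ≤ 1.45 * r := le_trans hs (by nlinarith)
  rw [abs_le] at h ⊢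
  constructor <;> nlinarith [h.1, h.2, mul_nonneg hs0 hd.le, sq_nonneg (t - s)]

set_option maxHeartbeats 1000000 in
/-- under the approximate-distance hypotheses of the almost-orthogonal
configuration, for every `v ∈ ℝ^{k+1}` one has
`‖Σ_α v_α·(w − x_α)‖ ≥ (r/(2·√(k+1)))·‖v‖`. -/
theorem smul_sub_combination_lower_bound {N : ℕ} (hN : 0 < N)
    (k : ℕ) (r δ : ℝ) (hr : 0 < r) (hδ : 0 < δ) (hδr : δ ≤ 0.1 * r)
    (hkδ : 60 * ((k : ℝ) + 1) ^ 2 * δ ≤ r)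
    (x : Fin (k + 1) → EuclideanSpace ℝ (Fin N)) (w : EuclideanSpace ℝ (Fin N))
    (h1 : ∀ α : Fin (k + 1), α ≠ 0 → |‖x α - x 0‖ - r| ≤ δ)
    (h2 : ∀ α β : Fin (k + 1), α ≠ 0 → β ≠ 0 → α ≠ β →
      |‖x α - x β‖ - Real.sqrt 2 * r| ≤ δ)
    (h3 : |‖w - x 0‖ - r| ≤ δ)
    (h4 : ∀ α : Fin (k + 1), α ≠ 0 → |‖w - x α‖ - Real.sqrt 2 * r| ≤ δ) :
    ∀ v : Fin (k + 1) → ℝ,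
      r / (2 * Real.sqrt ((k : ℝ) + 1)) * Real.sqrt (∑ α, v α ^ 2) ≤
        ‖∑ α, v α • (w - x α)‖ := by
  intro v
  set K : ℝ := (k : ℝ) + 1 with hK
  have hk0 : (0:ℝ) ≤ (k:ℝ) := Nat.cast_nonneg k
  have hK1 : (1:ℝ) ≤ K := by rw [hK]; linarith
  have hK0 : (0:ℝ) < K := by linarith
  -- basic facts about sqrt 2
  have hsqrt2_nn : (0:ℝ) ≤ Real.sqrt 2 := Real.sqrt_nonneg 2
  have hsqrt2_ge : (1:ℝ) ≤ Real.sqrt 2 := by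
    nlinarith [Real.sq_sqrt (by norm_num : (0:ℝ) ≤ 2), Real.sqrt_nonneg 2]
  -- the vectors
  set y : Fin (k + 1) → EuclideanSpace ℝ (Fin N) := fun α => w - x α with hy
  -- squared norm estimates
  have hy0 : |‖y 0‖ ^ 2 - r ^ 2| ≤ 3 * r * δ := by
    have := aux_sq_close hr hδ hδr hr.le (by nlinarith) h3
    simpa [hy] using this
  have hyα : ∀ α, α ≠ 0 → |‖y α‖ ^ 2 - 2 * r ^ 2| ≤ 3 * r * δ := by
    intro α hα
    have h := aux_sq_close hr hδ hδr (by positivity) (le_refl _) (h4 α hα)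
    have : (Real.sqrt 2 * r) ^ 2 = 2 * r ^ 2 := by
      rw [mul_pow, Real.sq_sqrt (by norm_num : (0:ℝ) ≤ 2)]
    rw [this] at h
    simpa [hy] using h
  have hsub : ∀ α β : Fin (k+1), y α - y β = x β - x α := by
    intro α β; simp only [hy]; abel
  have hyd0 : ∀ α, α ≠ 0 → |‖y 0 - y α‖ ^ 2 - r ^ 2| ≤ 3 * r * δ := by
    intro α hα
    have h := aux_sq_close hr hδ hδr hr.le (by nlinarith) (h1 α hα)
    rw [hsub 0 α]
    simpa using h
  have hydd : ∀ α β, α ≠ 0 → β ≠ 0 → α ≠ β → |‖y α - y β‖ ^ 2 - 2 * r ^ 2| ≤ 3 * r * δ := by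
    intro α β hα hβ hαβ
    have h := aux_sq_close hr hδ hδr (by positivity) (le_refl _) (h2 β α hβ hα (Ne.symm hαβ))
    have e2 : (Real.sqrt 2 * r) ^ 2 = 2 * r ^ 2 := by
      rw [mul_pow, Real.sq_sqrt (by norm_num : (0:ℝ) ≤ 2)]
    rw [e2] at h
    rw [hsub α β]
    simpa using h
  -- inner product estimates
  set g : Fin (k+1) → Fin (k+1) → ℝ := fun α β => inner ℝ (y α) (y β) with hg
  set m : Fin (k+1) → Fin (k+1) → ℝ := fun α β => if α = β ∧ α ≠ 0 then 2 else 1 with hm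
  have hinner : ∀ α β, g α β = (‖y α‖ ^ 2 + ‖y β‖ ^ 2 - ‖y α - y β‖ ^ 2) / 2 := by
    intro α β
    have := norm_sub_sq_real (y α) (y β)
    simp only [hg]
    linarith
  have hG : ∀ α β, |g α β - r ^ 2 * m α β| ≤ 5 * r * δ := by
    intro α β
    have hrδ : 0 < r * δ := mul_pos hr hδ
    by_cases hab : α = β
    · subst hab
      have hgd : g α α = ‖y α‖ ^ 2 := by
        simp only [hg]; exact real_inner_self_eq_norm_sq (y α)
      by_cases hα : α = 0
      · subst hα
        have hm1 : m 0 0 = 1 := by simp [hm]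
        rw [hgd, hm1]
        calc |‖y 0‖ ^ 2 - r ^ 2 * 1| = |‖y 0‖ ^ 2 - r ^ 2| := by ring_nf
          _ ≤ 3 * r * δ := hy0
          _ ≤ 5 * r * δ := by nlinarith
      · have hm2 : m α α = 2 := by simp [hm, hα]
        rw [hgd, hm2]
        calc |‖y α‖ ^ 2 - r ^ 2 * 2| = |‖y α‖ ^ 2 - 2 * r ^ 2| := by ring_nf
          _ ≤ 3 * r * δ := hyα α hα
          _ ≤ 5 * r * δ := by nlinarith
    · have hm1 : m α β = 1 := by simp [hm, hab]
      rw [hinner, hm1]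
      by_cases hα : α = 0
      · subst hα
        have hβ : β ≠ 0 := fun h => hab h.symm
        have e1 := hy0
        have e2 := hyα β hβ
        have e3 := hyd0 β hβ
        rw [abs_le] at e1 e2 e3 ⊢
        constructor <;> linarith [e1.1, e1.2, e2.1, e2.2, e3.1, e3.2]
      · by_cases hβ : β = 0
        · subst hβ
          have e1 := hyα α hα
          have e2 := hy0
          have e3 : |‖y α - y 0‖ ^ 2 - r ^ 2| ≤ 3 * r * δ := by
            rw [show y α - y 0 = -(y 0 - y α) by abel, norm_neg]
            exact hyd0 α hα
          rw [abs_le] at e1 e2 e3 ⊢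
          constructor <;> linarith [e1.1, e1.2, e2.1, e2.2, e3.1, e3.2]
        · have e1 := hyα α hα
          have e2 := hyα β hβ
          have e3 := hydd α β hα hβ hab
          rw [abs_le] at e1 e2 e3 ⊢
          constructor <;> linarith [e1.1, e1.2, e2.1, e2.2, e3.1, e3.2]
  -- expansion of the norm squared
  have hexp : ‖∑ α, v α • y α‖ ^ 2 = ∑ α, ∑ β, v α * v β * g α β := by
    rw [← real_inner_self_eq_norm_sq, sum_inner]
    refine Finset.sum_congr rfl fun α _ => ?_
    rw [inner_sum]
    refine Finset.sum_congr rfl fun β _ => ?_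
    rw [real_inner_smul_left, real_inner_smul_right, hg]
    ring
  -- the ideal quadratic form
  have hideal : ∑ α, ∑ β, v α * v β * (r ^ 2 * m α β)
      = r ^ 2 * ((∑ α, v α) ^ 2 + (∑ α, v α ^ 2) - v 0 ^ 2) := by
    have hrow : ∀ α, ∑ β, v α * v β * (r ^ 2 * m α β)
        = r ^ 2 * (v α * (∑ β, v β)) + (if α = 0 then 0 else r ^ 2 * v α ^ 2) := by
      intro α
      by_cases hα : α = 0
      · subst hα
        rw [if_pos rfl, add_zero, Finset.mul_sum, Finset.mul_sum]
        refine Finset.sum_congr rfl fun β _ => ?_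
        have hm0 : m 0 β = 1 := by simp [hm]
        rw [hm0]; ring
      · rw [if_neg hα]
        have : ∀ β, v α * v β * (r ^ 2 * m α β)
            = r ^ 2 * (v α * v β) + (if β = α then r ^ 2 * (v α * v β) else 0) := by
          intro β
          simp only [hm]
          by_cases hb : α = β
          · subst hb; rw [if_pos ⟨rfl, hα⟩, if_pos rfl]; ring
          · rw [if_neg (fun h => hb h.1), if_neg (fun h => hb h.symm)]; ring
        rw [Finset.sum_congr rfl fun β _ => this β, Finset.sum_add_distrib,
          Finset.sum_ite_eq' Finset.univ α (fun β => r ^ 2 * (v α * v β)),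
          if_pos (Finset.mem_univ α), ← Finset.mul_sum, ← Finset.mul_sum]
        ring
    rw [Finset.sum_congr rfl fun α _ => hrow α, Finset.sum_add_distrib]
    have h1 : ∑ α, r ^ 2 * (v α * (∑ β, v β)) = r ^ 2 * (∑ α, v α) ^ 2 := by
      rw [← Finset.mul_sum, ← Finset.sum_mul]; ring
    have h2 : ∑ α, (if α = 0 then (0:ℝ) else r ^ 2 * v α ^ 2)
        = r ^ 2 * ((∑ α, v α ^ 2) - v 0 ^ 2) := by
      have : ∀ α, (if α = 0 then (0:ℝ) else r ^ 2 * v α ^ 2)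
          = r ^ 2 * v α ^ 2 - (if α = 0 then r ^ 2 * v α ^ 2 else 0) := by
        intro α; by_cases hα : α = 0 <;> simp [hα]
      rw [Finset.sum_congr rfl fun α _ => this α, Finset.sum_sub_distrib,
        Finset.sum_ite_eq' Finset.univ 0 (fun α => r ^ 2 * v α ^ 2),
        if_pos (Finset.mem_univ 0), ← Finset.mul_sum]
      ring
    rw [h1, h2]; ring
  -- notation for the pieces
  set S : ℝ := ∑ α, v α with hS
  set P : ℝ := ∑ α, v α ^ 2 with hP
  have hPnn : 0 ≤ P := Finset.sum_nonneg fun _ _ => sq_nonneg _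
  -- the exact lower bound for the ideal form
  have hQ : P / (2 * K) ≤ S ^ 2 + P - v 0 ^ 2 := by
    set T : ℝ := ∑ i : Fin k, v i.succ with hT
    set A : ℝ := ∑ i : Fin k, v i.succ ^ 2 with hA
    have hSsplit : S = v 0 + T := by rw [hS, Fin.sum_univ_succ]
    have hPsplit : P = v 0 ^ 2 + A := by rw [hP, Fin.sum_univ_succ]
    have hAnn : 0 ≤ A := Finset.sum_nonneg fun _ _ => sq_nonneg _
    have hCS : T ^ 2 ≤ (k : ℝ) * A := by
      have := sq_sum_le_card_mul_sum_sq (s := Finset.univ) (f := fun i : Fin k => v i.succ)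
      simpa [hT, hA] using this
    rw [hSsplit, hPsplit]
    rw [div_le_iff₀ (by positivity)]
    have expand : ((v 0 + T) ^ 2 + (v 0 ^ 2 + A) - v 0 ^ 2) * (2 * K)
        = 2 * (v 0 + T) ^ 2 + 2 * A + 2 * ((k:ℝ) * (v 0 + T) ^ 2) + 2 * ((k:ℝ) * A) := by
      rw [hK]; ring
    have h6 : 2 * (v 0 + T) ^ 2 + 2 * T ^ 2 - v 0 ^ 2 = (v 0 + 2 * T) ^ 2 := by ring
    have h7 : 0 ≤ (k:ℝ) * (v 0 + T) ^ 2 := by positivity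
    rw [expand]
    linarith [hCS, hAnn, h7, sq_nonneg (v 0 + 2 * T)]
  -- error control
  have herr : |∑ α, ∑ β, v α * v β * g α β - ∑ α, ∑ β, v α * v β * (r ^ 2 * m α β)|
      ≤ 5 * r * δ * (∑ α, |v α|) ^ 2 := by
    rw [← Finset.sum_sub_distrib]
    calc |∑ α, (∑ β, v α * v β * g α β - ∑ β, v α * v β * (r ^ 2 * m α β))|
        ≤ ∑ α, |∑ β, v α * v β * g α β - ∑ β, v α * v β * (r ^ 2 * m α β)| :=
          Finset.abs_sum_le_sum_abs _ _
      _ ≤ ∑ α, ∑ β, |v α| * |v β| * (5 * r * δ) := by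
          refine Finset.sum_le_sum fun α _ => ?_
          rw [← Finset.sum_sub_distrib]
          calc |∑ β, (v α * v β * g α β - v α * v β * (r ^ 2 * m α β))|
              ≤ ∑ β, |v α * v β * g α β - v α * v β * (r ^ 2 * m α β)| :=
                Finset.abs_sum_le_sum_abs _ _
            _ ≤ ∑ β, |v α| * |v β| * (5 * r * δ) := by
                refine Finset.sum_le_sum fun β _ => ?_
                have : v α * v β * g α β - v α * v β * (r ^ 2 * m α β)
                    = v α * v β * (g α β - r ^ 2 * m α β) := by ring
                rw [this, abs_mul, abs_mul]
                exact mul_le_mul_of_nonneg_left (hG α β) (by positivity)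
      _ = 5 * r * δ * (∑ α, |v α|) ^ 2 := by
          have hrow2 : ∀ α : Fin (k+1), ∑ β, |v α| * |v β| * (5 * r * δ)
              = |v α| * ((∑ β, |v β|) * (5 * r * δ)) := by
            intro α
            simp_rw [mul_assoc]
            rw [← Finset.mul_sum, ← Finset.sum_mul]
          rw [Finset.sum_congr rfl fun α _ => hrow2 α, ← Finset.sum_mul]
          ring
  have habsP : (∑ α, |v α|) ^ 2 ≤ K * P := by
    have := sq_sum_le_card_mul_sum_sq (s := Finset.univ) (f := fun α : Fin (k+1) => |v α|)
    simp only [Finset.card_univ, Fintype.card_fin, sq_abs] at this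
    calc (∑ α, |v α|) ^ 2 ≤ ((k+1 : ℕ) : ℝ) * ∑ α, v α ^ 2 := by exact_mod_cast this
      _ = K * P := by push_cast [hK, hP]; ring
  -- main squared inequality
  have hmain : r ^ 2 / (4 * K) * P ≤ ‖∑ α, v α • y α‖ ^ 2 := by
    rw [hexp]
    set GS : ℝ := ∑ α, ∑ β, v α * v β * g α β with hGS
    set MS : ℝ := ∑ α, ∑ β, v α * v β * (r ^ 2 * m α β) with hMS
    have hlow : MS - 5 * r * δ * (K * P) ≤ GS := by
      have h1 := (abs_le.mp herr).1
      have h2 : 5 * r * δ * (∑ α, |v α|) ^ 2 ≤ 5 * r * δ * (K * P) := by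
        exact mul_le_mul_of_nonneg_left habsP (by positivity)
      linarith
    have hidlow : r ^ 2 * (P / (2 * K)) ≤ MS := by
      rw [hideal]
      have := hQ
      nlinarith [sq_nonneg r]
    have hδsmall : 5 * r * δ * (K * P) ≤ r ^ 2 / (4 * K) * P := by
      have hδK : 20 * K ^ 2 * δ ≤ r := by nlinarith
      rw [div_mul_eq_mul_div, le_div_iff₀ (by positivity)]
      nlinarith [mul_nonneg (mul_nonneg hr.le hδ.le) hPnn, hK0, hPnn,
        mul_le_mul_of_nonneg_right (mul_le_mul_of_nonneg_left hδK hr.le) hPnn]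
    have : r ^ 2 / (4 * K) * P ≤ r ^ 2 * (P / (2 * K)) - 5 * r * δ * (K * P) := by
      have hhalf : r ^ 2 * (P / (2 * K)) = r ^ 2 / (2 * K) * P := by ring
      rw [hhalf]
      have : r ^ 2 / (4 * K) * P + 5 * r * δ * (K * P) ≤ r ^ 2 / (2 * K) * P := by
        have e : r ^ 2 / (2 * K) * P - r ^ 2 / (4 * K) * P = r ^ 2 / (4 * K) * P := by
          field_simp; ring
        nlinarith [hδsmall]
      linarith
    exact le_trans this (le_trans (sub_le_sub_right hidlow _) hlow)
  -- conclude by taking square roots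
  have hlhs_nn : 0 ≤ r / (2 * Real.sqrt K) * Real.sqrt P := by positivity
  have hsq : (r / (2 * Real.sqrt K) * Real.sqrt P) ^ 2 = r ^ 2 / (4 * K) * P := by
    rw [mul_pow, div_pow, mul_pow, Real.sq_sqrt hPnn, Real.sq_sqrt hK0.le]
    norm_num
  have hfinal : (r / (2 * Real.sqrt K) * Real.sqrt P) ^ 2 ≤ ‖∑ α, v α • y α‖ ^ 2 := by
    rw [hsq]; exact hmain
  have := Real.sqrt_le_sqrt hfinal
  rw [Real.sqrt_sq hlhs_nn, Real.sqrt_sq (norm_nonneg _)] at this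
  simpa [hy, hK, hP] using this
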